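/- A word over {α, β} represents the identity element of the group D = ⟨α, β | α² = β² = 1⟩ if and only if it can be transformed into the empty word by a finite sequence of cancellation steps, each deleting an adjacent pair of equal letters. -/

import Mathlib

/-- Relators for the presentation ⟨α, β | α² = β² = 1⟩, with generators indexed by `Bool`. -/
def dihedralRels : Set (FreeGroup Bool) :=
  {FreeGroup.of true ^ 2, FreeGroup.of false ^ 2}

/-- The element of D = ⟨α, β | α² = β² = 1⟩ represented by a word over {α, β}. -/
def wordElem (l : List Bool) : PresentedGroup dihedralRels :=
  (l.map PresentedGroup.of).prod

/-- A cancellation step on arrow words over the two-letter alphabet {α, β}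
(modeled as `List Bool`): delete an adjacent pair of equal letters. -/
def CancelStep (l l' : List Bool) : Prop :=
  ∃ (p s : List Bool) (x : Bool), l = p ++ [x, x] ++ s ∧ l' = p ++ s

/-! Auxiliary material -/

def cB (b : Bool) : ℤ := if b then 0 else 1

/-- Translation part of the affine action of a word on ℤ. -/
def Aw : List Bool → ℤ
  | [] => 0
  | b :: t => cB b - Aw t

/-- Linear part (±1) of the affine action of a word on ℤ. -/
def Ew : List Bool → ℤ
  | [] => 1
  | _ :: t => - Ew t

/-- The generators map to the involutions `x ↦ cB b - x` of ℤ. -/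
def genPerm (b : Bool) : Equiv.Perm ℤ := Equiv.subLeft (cB b)

lemma genPerm_sq (b : Bool) : genPerm b * genPerm b = 1 := by
  ext x
  simp [genPerm, Equiv.subLeft]

lemma rels_hold : ∀ r ∈ dihedralRels, FreeGroup.lift genPerm r = 1 := by
  intro r hr
  rcases hr with h | h <;> subst h <;>
    simp [map_pow, pow_two, genPerm_sq]

def toPerm : PresentedGroup dihedralRels →* Equiv.Perm ℤ :=
  PresentedGroup.toGroup rels_hold

lemma wordElem_nil : wordElem [] = 1 := rfl

lemma wordElem_cons (b : Bool) (t : List Bool) :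
    wordElem (b :: t) = PresentedGroup.of b * wordElem t := by
  simp [wordElem]

lemma wordElem_append (a b : List Bool) :
    wordElem (a ++ b) = wordElem a * wordElem b := by
  simp [wordElem]

lemma toPerm_eval (l : List Bool) (x : ℤ) :
    toPerm (wordElem l) x = Aw l + Ew l * x := by
  induction l with
  | nil => simp [wordElem_nil, Aw, Ew]
  | cons b t ih =>
    rw [wordElem_cons, map_mul]
    have : toPerm (PresentedGroup.of b) = genPerm b := PresentedGroup.toGroup.of rels_hold
    simp only [Equiv.Perm.mul_apply, this, ih, genPerm, Equiv.subLeft_apply, Aw, Ew]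
    ring

lemma of_sq (b : Bool) :
    (PresentedGroup.of (rels := dihedralRels) b) * PresentedGroup.of b = 1 := by
  have : ((FreeGroup.of b) ^ 2 : FreeGroup Bool) ∈ Subgroup.normalClosure dihedralRels := by
    apply Subgroup.subset_normalClosure
    cases b
    · exact Or.inr rfl
    · exact Or.inl rfl
  have h : (QuotientGroup.mk ((FreeGroup.of b) ^ 2) : PresentedGroup dihedralRels) = 1 :=
    (QuotientGroup.eq_one_iff _).2 this
  calc (PresentedGroup.of (rels := dihedralRels) b) * PresentedGroup.of b
      = QuotientGroup.mk ((FreeGroup.of b) ^ 2) := by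
        rw [pow_two]; rfl
    _ = 1 := h

lemma wordElem_step {l l' : List Bool} (h : CancelStep l l') : wordElem l = wordElem l' := by
  rcases h with ⟨p, s, x, rfl, rfl⟩
  rw [wordElem_append, wordElem_append, wordElem_append]
  have : wordElem [x, x] = 1 := by
    rw [show ([x, x] : List Bool) = [x] ++ [x] from rfl, wordElem_append]
    simpa [wordElem] using of_sq x
  rw [this, mul_one]

lemma ew_eq (l : List Bool) : Ew l = (-1) ^ l.length := by
  induction l with
  | nil => rfl
  | cons b t ih => simp [Ew, ih, pow_succ]

/-- For an alternating word of even length, the translation part is ±(length/2). -/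
lemma aw_alt : ∀ (l : List Bool), l.Chain' (· ≠ ·) → Even l.length →
    Aw l = (l.length / 2 : ℕ) * (if l.head? = some false then 1 else -1)
  | [] => by intro _ _; simp [Aw]
  | [b] => by intro _ h; simp at h
  | b :: b2 :: t => by
    intro hc he
    have hne : b ≠ b2 := (List.isChain_cons_cons.1 hc).1
    have hct : t.Chain' (· ≠ ·) := (List.isChain_cons_cons.1 hc).2.tail
    have het : Even t.length := by
      simp only [List.length_cons] at he
      rcases he with ⟨k, hk⟩
      exact ⟨k - 1, by omega⟩
    have IH := aw_alt t hct het
    have hb2 : b2 = !b := by cases b <;> cases b2 <;> simp_all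
    have hlen : ((b :: b2 :: t).length / 2 : ℕ) = t.length / 2 + 1 := by
      simp only [List.length_cons]; omega
    have hAw : Aw (b :: b2 :: t) = cB b - cB b2 + Aw t := by
      simp [Aw]; ring
    rcases het with ⟨k, hk⟩
    cases t with
    | nil =>
      subst hb2
      cases b <;> simp [hAw, Aw, cB]
    | cons b3 t' =>
      have hb3 : b3 = b := by
        have : b2 ≠ b3 := (List.isChain_cons_cons.1 (List.isChain_cons_cons.1 hc).2).1
        subst hb2; cases b <;> cases b3 <;> simp_all
      subst hb2
      rw [hAw, IH, hlen, hb3]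
      cases b <;> simp [cB] <;> push_cast <;> ring

theorem exists_pair_or_chain (l : List Bool) :
    l.Chain' (· ≠ ·) ∨ ∃ p s x, l = p ++ [x, x] ++ s := by
  induction l with
  | nil => left; exact List.isChain_nil
  | cons b t ih =>
    cases t with
    | nil => left; exact List.isChain_singleton _
    | cons b2 t' =>
      by_cases hbb : b = b2
      · right; exact ⟨[], t', b, by simp [hbb]⟩
      · rcases ih with hch | ⟨p, s, x, hps⟩
        · left; exact List.isChain_cons_cons.2 ⟨hbb, hch⟩
        · right; exact ⟨b :: p, s, x, by simp [hps]⟩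

lemma alt_ne_one {l : List Bool} (hc : l.Chain' (· ≠ ·)) (hl : l ≠ [])
    (h : wordElem l = 1) : False := by
  have h0 : Aw l + Ew l * 0 = 0 := by
    rw [← toPerm_eval, h]; simp
  have h1 : Aw l + Ew l * 1 = 1 := by
    rw [← toPerm_eval, h]; simp
  have hA : Aw l = 0 := by linarith
  have hE : Ew l = 1 := by linarith
  have heven : Even l.length := by
    rw [ew_eq] at hE
    by_contra hodd
    rw [(Nat.not_even_iff_odd.1 hodd).neg_one_pow] at hE
    norm_num at hE
  have := aw_alt l hc heven
  rw [hA] at this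
  have hlen : l.length ≠ 0 := by
    simpa using List.length_pos_iff.2 hl |>.ne'
  have h2 : (l.length / 2 : ℕ) ≠ 0 := by
    rcases heven with ⟨k, hk⟩
    omega
  rcases heven with ⟨k, hk⟩
  by_cases hh : l.head? = some false <;> simp [hh] at this <;>
    · have : (l.length / 2 : ℤ) = 0 := by push_cast at this ⊢ <;> omega
      have : (l.length / 2 : ℕ) = 0 := by exact_mod_cast this
      omega

lemma reduces_of_eq_one : ∀ n (l : List Bool), l.length = n → wordElem l = 1 →
    Relation.ReflTransGen CancelStep l []
  | n, l, hn, h => by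
    rcases exists_pair_or_chain l with hch | ⟨p, s, x, hps⟩
    · by_cases hl : l = []
      · subst hl; exact Relation.ReflTransGen.refl
      · exact absurd h (fun h => alt_ne_one hch hl h)
    · have hstep : CancelStep l (p ++ s) := ⟨p, s, x, hps, rfl⟩
      have hlen : (p ++ s).length < n := by
        subst hn hps; simp
      have h' : wordElem (p ++ s) = 1 := (wordElem_step hstep).symm.trans h
      exact Relation.ReflTransGen.head hstep
        (reduces_of_eq_one (p ++ s).length (p ++ s) rfl h')
  termination_by n => n
  decreasing_by simpa using hlen

/-- A word over {α, β} represents the identity of D = ⟨α, β | α² = β² = 1⟩ iff it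
can be reduced to the empty word by cancellation steps. -/
theorem wordElem_eq_one_iff_reduces_to_nil (l : List Bool) :
    wordElem l = 1 ↔ Relation.ReflTransGen CancelStep l [] := by
  constructor
  · intro h
    exact reduces_of_eq_one l.length l rfl h
  · intro h
    have key : ∀ {a b : List Bool}, Relation.ReflTransGen CancelStep a b →
        wordElem a = wordElem b := by
      intro a b hab
      induction hab with
      | refl => rfl
      | tail _ hstep ih => exact ih.trans (wordElem_step hstep)
    simpa [wordElem_nil] using key h
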